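/- The Lah triangle, i.e., the matrix L with L(n,k) = C(n,k)·(n+1)!/(k+1)! for n ≥ k ≥ 0, is an SDR-matrix of order m for every m ≥ 3. -/

import Mathlib

/-- `A` is an SDR-matrix of order `m`: the generalized Star of David rule holds for
all `2 ≤ p ≤ m-1` and `0 ≤ r ≤ p-1`. -/
def IsSDR (m : ℕ) (A : ℕ → ℕ → ℕ) : Prop :=
  ∀ n k p r : ℕ, 2 ≤ p → p ≤ m - 1 → r ≤ p - 1 →
    (∏ i ∈ Finset.range (r+1), A (n+i) (k+r-i)) *
      (∏ i ∈ Finset.range (p-r), A (n+p-i) (k+r+i+1)) =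
    (∏ i ∈ Finset.range (r+1), A (n+p-i) (k+p-r+i)) *
      (∏ i ∈ Finset.range (p-r), A (n+i) (k+p-r-i-1))

namespace LahSDR

def q (a : ℕ) : ℕ := (a+1).factorial * a.factorial

def Lh (n k : ℕ) : ℕ := n.choose k * ((n+1).factorial / (k+1).factorial)

lemma q_pos (a : ℕ) : 0 < q a := Nat.mul_pos (Nat.factorial_pos _) (Nat.factorial_pos _)

lemma key {a c : ℕ} (h : c ≤ a) : Lh a c * q c * (a-c).factorial = q a := by
  have h1 : (c+1).factorial ∣ (a+1).factorial :=
    Nat.factorial_dvd_factorial (by omega)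
  have h2 : (a+1).factorial / (c+1).factorial * (c+1).factorial = (a+1).factorial :=
    Nat.div_mul_cancel h1
  have h3 : a.choose c * c.factorial * (a-c).factorial = a.factorial :=
    Nat.choose_mul_factorial_mul_factorial h
  have : Lh a c * q c * (a-c).factorial
      = (a.choose c * c.factorial * (a-c).factorial) *
        ((a+1).factorial / (c+1).factorial * (c+1).factorial) := by
    unfold Lh q; ring
  rw [this, h2, h3]
  unfold q; ring

lemma pair (a c t : ℕ) :
    Lh a c * (q (a+t) * q c) = Lh (a+t) (c+t) * (q a * q (c+t)) := by
  rcases le_or_gt c a with h | h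
  · have h2 : c + t ≤ a + t := by omega
    apply Nat.eq_of_mul_eq_mul_right (Nat.factorial_pos (a - c))
    have k1 := key h
    have k2 := key h2
    rw [show a + t - (c + t) = a - c by omega] at k2
    calc Lh a c * (q (a+t) * q c) * (a-c).factorial
        = (Lh a c * q c * (a-c).factorial) * q (a+t) := by ring
      _ = q a * q (a+t) := by rw [k1]
      _ = (Lh (a+t) (c+t) * q (c+t) * (a-c).factorial) * q a := by rw [k2]; ring
      _ = Lh (a+t) (c+t) * (q a * q (c+t)) * (a-c).factorial := by ring
  · have e1 : a.choose c = 0 := Nat.choose_eq_zero_of_lt h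
    have e2 : (a+t).choose (c+t) = 0 := Nat.choose_eq_zero_of_lt (by omega)
    simp [Lh, e1, e2]

/-- reflect a product over `range N` -/
lemma reflect (f g : ℕ → ℕ) (N : ℕ) (h : ∀ i < N, f i = g (N-1-i)) :
    ∏ i ∈ Finset.range N, f i = ∏ i ∈ Finset.range N, g i := by
  rw [← Finset.prod_range_reflect g N]
  exact Finset.prod_congr rfl (fun i hi => h i (Finset.mem_range.mp hi))

lemma main_eq (n K N t : ℕ) (hK : N ≤ K + 1) :
    (∏ i ∈ Finset.range N, Lh (n+i) (K-i)) *
      ((∏ i ∈ Finset.range N, q (n+t+i)) * (∏ i ∈ Finset.range N, q (K-i)))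
    = (∏ i ∈ Finset.range N, Lh (n+t+i) (K+t-i)) *
      ((∏ i ∈ Finset.range N, q (n+i)) * (∏ i ∈ Finset.range N, q (K+t-i))) := by
  rw [← Finset.prod_mul_distrib, ← Finset.prod_mul_distrib,
      ← Finset.prod_mul_distrib, ← Finset.prod_mul_distrib]
  apply Finset.prod_congr rfl
  intro i hi
  rw [Finset.mem_range] at hi
  have e1 : n + t + i = (n + i) + t := by ring
  have e2 : K + t - i = (K - i) + t := by omega
  rw [e1, e2]
  exact pair (n+i) (K-i) t

end LahSDR

open LahSDR in
theorem lah_triangle_isSDR (m : ℕ) (hm : 3 ≤ m) :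
    IsSDR m (fun n k =>
      Nat.choose n k * (Nat.factorial (n+1) / Nat.factorial (k+1))) := by
  intro n k p r hp hpm hr
  have hrp : r + 1 ≤ p := by omega
  show (∏ i ∈ Finset.range (r+1), Lh (n+i) (k+r-i)) * (∏ i ∈ Finset.range (p-r), Lh (n+p-i) (k+r+i+1)) = (∏ i ∈ Finset.range (r+1), Lh (n+p-i) (k+p-r+i)) * (∏ i ∈ Finset.range (p-r), Lh (n+i) (k+p-r-i-1))
  -- Eq for the first pairing
  have E1 : (∏ i ∈ Finset.range (r+1), Lh (n+i) (k+r-i)) * ((∏ i ∈ Finset.range (r+1), q (n+p-i)) * (∏ i ∈ Finset.range (r+1), q (k+r-i))) = (∏ i ∈ Finset.range (r+1), Lh (n+p-i) (k+p-r+i)) * ((∏ i ∈ Finset.range (r+1), q (n+i)) * (∏ i ∈ Finset.range (r+1), q (k+p-r+i))) := by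
    have E := main_eq n (k+r) (r+1) (p-r) (by omega)
    have c1 : (∏ i ∈ Finset.range (r+1), q (n+(p-r)+i)) = (∏ i ∈ Finset.range (r+1), q (n+p-i)) := by
      refine reflect _ _ _ ?_
      intro i hi
      have h1 : n+(p-r)+i = n+p-(r+1-1-i) := by omega
      rw [h1]
    have c2 : (∏ i ∈ Finset.range (r+1), Lh (n+(p-r)+i) (k+r+(p-r)-i)) = (∏ i ∈ Finset.range (r+1), Lh (n+p-i) (k+p-r+i)) := by
      refine reflect _ _ _ ?_
      intro i hi
      have h1 : n+(p-r)+i = n+p-(r+1-1-i) := by omega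
      have h2 : k+r+(p-r)-i = k+p-r+(r+1-1-i) := by omega
      rw [h1, h2]
    have c3 : (∏ i ∈ Finset.range (r+1), q (k+r+(p-r)-i)) = (∏ i ∈ Finset.range (r+1), q (k+p-r+i)) := by
      refine reflect _ _ _ ?_
      intro i hi
      have h2 : k+r+(p-r)-i = k+p-r+(r+1-1-i) := by omega
      rw [h2]
    rw [c1, c2, c3] at E
    exact E
  -- Eq for the second pairing
  have E2 : (∏ i ∈ Finset.range (p-r), Lh (n+i) (k+p-r-i-1)) * ((∏ i ∈ Finset.range (p-r), q (n+p-i)) * (∏ i ∈ Finset.range (p-r), q (k+p-r-1-i))) = (∏ i ∈ Finset.range (p-r), Lh (n+p-i) (k+r+i+1)) * ((∏ i ∈ Finset.range (p-r), q (n+i)) * (∏ i ∈ Finset.range (p-r), q (k+r+1+i))) := by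
    have E := main_eq n (k+p-r-1) (p-r) (r+1) (by omega)
    have d1 : (∏ i ∈ Finset.range (p-r), q (n+(r+1)+i)) = (∏ i ∈ Finset.range (p-r), q (n+p-i)) := by
      refine reflect _ _ _ ?_
      intro i hi
      have h1 : n+(r+1)+i = n+p-(p-r-1-i) := by omega
      rw [h1]
    have d2 : (∏ i ∈ Finset.range (p-r), Lh (n+(r+1)+i) (k+p-r-1+(r+1)-i)) = (∏ i ∈ Finset.range (p-r), Lh (n+p-i) (k+r+i+1)) := by
      refine reflect _ _ _ ?_
      intro i hi
      have h1 : n+(r+1)+i = n+p-(p-r-1-i) := by omega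
      have h2 : k+p-r-1+(r+1)-i = k+r+(p-r-1-i)+1 := by omega
      rw [h1, h2]
    have d3 : (∏ i ∈ Finset.range (p-r), q (k+p-r-1+(r+1)-i)) = (∏ i ∈ Finset.range (p-r), q (k+r+1+i)) := by
      refine reflect _ _ _ ?_
      intro i hi
      have h2 : k+p-r-1+(r+1)-i = k+r+1+(p-r-1-i) := by omega
      rw [h2]
    have d4 : (∏ i ∈ Finset.range (p-r), Lh (n+i) (k+p-r-1-i)) = (∏ i ∈ Finset.range (p-r), Lh (n+i) (k+p-r-i-1)) := by
      refine Finset.prod_congr rfl ?_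
      intro i hi
      have h2 : k+p-r-1-i = k+p-r-i-1 := by omega
      rw [h2]
    rw [d1, d2, d3, d4] at E
    exact E
  -- the row products match
  have zr1 : (∏ i ∈ Finset.range (p+1), q (n+i)) = (∏ i ∈ Finset.range (p-r), q (n+i)) * (∏ i ∈ Finset.range (r+1), q (n+p-i)) := by
    rw [show p+1 = (p-r)+(r+1) from by omega, Finset.prod_range_add]
    congr 1
    refine reflect _ _ _ ?_
    intro i hi
    have h1 : n+((p-r)+i) = n+p-(r+1-1-i) := by omega
    rw [h1]
  have zr2 : (∏ i ∈ Finset.range (p+1), q (n+i)) = (∏ i ∈ Finset.range (r+1), q (n+i)) * (∏ i ∈ Finset.range (p-r), q (n+p-i)) := by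
    rw [show p+1 = (r+1)+(p-r) from by omega, Finset.prod_range_add]
    congr 1
    refine reflect _ _ _ ?_
    intro i hi
    have h1 : n+((r+1)+i) = n+p-(p-r-1-i) := by omega
    rw [h1]
  -- the column products match
  have zc1 : (∏ i ∈ Finset.range (p+1), q (k+i)) = (∏ i ∈ Finset.range (r+1), q (k+r-i)) * (∏ i ∈ Finset.range (p-r), q (k+r+1+i)) := by
    rw [show p+1 = (r+1)+(p-r) from by omega, Finset.prod_range_add]
    congr 1
    · refine reflect _ _ _ ?_
      intro i hi
      have h1 : k+i = k+r-(r+1-1-i) := by omega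
      rw [h1]
    · refine Finset.prod_congr rfl ?_
      intro i hi
      have h1 : k+((r+1)+i) = k+r+1+i := by omega
      rw [h1]
  have zc2 : (∏ i ∈ Finset.range (p+1), q (k+i)) = (∏ i ∈ Finset.range (p-r), q (k+p-r-1-i)) * (∏ i ∈ Finset.range (r+1), q (k+p-r+i)) := by
    rw [show p+1 = (p-r)+(r+1) from by omega, Finset.prod_range_add]
    congr 1
    · refine reflect _ _ _ ?_
      intro i hi
      have h1 : k+i = k+p-r-1-(p-r-1-i) := by omega
      rw [h1]
    · refine Finset.prod_congr rfl ?_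
      intro i hi
      have h1 : k+((p-r)+i) = k+p-r+i := by omega
      rw [h1]
  have hW : (∏ i ∈ Finset.range (r+1), q (n+p-i)) * (∏ i ∈ Finset.range (r+1), q (k+r-i)) * ((∏ i ∈ Finset.range (p-r), q (n+i)) * (∏ i ∈ Finset.range (p-r), q (k+r+1+i))) = (∏ i ∈ Finset.range (r+1), q (n+i)) * (∏ i ∈ Finset.range (r+1), q (k+p-r+i)) * ((∏ i ∈ Finset.range (p-r), q (n+p-i)) * (∏ i ∈ Finset.range (p-r), q (k+p-r-1-i))) := by
    calc (∏ i ∈ Finset.range (r+1), q (n+p-i)) * (∏ i ∈ Finset.range (r+1), q (k+r-i)) * ((∏ i ∈ Finset.range (p-r), q (n+i)) * (∏ i ∈ Finset.range (p-r), q (k+r+1+i))) = ((∏ i ∈ Finset.range (p-r), q (n+i)) * (∏ i ∈ Finset.range (r+1), q (n+p-i))) * ((∏ i ∈ Finset.range (r+1), q (k+r-i)) * (∏ i ∈ Finset.range (p-r), q (k+r+1+i))) := by ring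
      _ = (∏ i ∈ Finset.range (p+1), q (n+i)) * (∏ i ∈ Finset.range (p+1), q (k+i)) := by rw [← zr1, ← zc1]
      _ = ((∏ i ∈ Finset.range (r+1), q (n+i)) * (∏ i ∈ Finset.range (p-r), q (n+p-i))) * ((∏ i ∈ Finset.range (p-r), q (k+p-r-1-i)) * (∏ i ∈ Finset.range (r+1), q (k+p-r+i))) := by rw [zr2, zc2]
      _ = (∏ i ∈ Finset.range (r+1), q (n+i)) * (∏ i ∈ Finset.range (r+1), q (k+p-r+i)) * ((∏ i ∈ Finset.range (p-r), q (n+p-i)) * (∏ i ∈ Finset.range (p-r), q (k+p-r-1-i))) := by ring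
  have pos : 0 < (∏ i ∈ Finset.range (r+1), q (n+p-i)) * (∏ i ∈ Finset.range (r+1), q (k+r-i)) * ((∏ i ∈ Finset.range (p-r), q (n+i)) * (∏ i ∈ Finset.range (p-r), q (k+r+1+i))) := by
    have h1 : ∀ N : ℕ, ∀ f : ℕ → ℕ, 0 < ∏ i ∈ Finset.range N, q (f i) :=
      fun N f => Finset.prod_pos (fun i _ => q_pos _)
    exact Nat.mul_pos (Nat.mul_pos (h1 _ _) (h1 _ _)) (Nat.mul_pos (h1 _ _) (h1 _ _))
  refine Nat.eq_of_mul_eq_mul_right pos ?_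
  calc (∏ i ∈ Finset.range (r+1), Lh (n+i) (k+r-i)) * (∏ i ∈ Finset.range (p-r), Lh (n+p-i) (k+r+i+1)) * ((∏ i ∈ Finset.range (r+1), q (n+p-i)) * (∏ i ∈ Finset.range (r+1), q (k+r-i)) * ((∏ i ∈ Finset.range (p-r), q (n+i)) * (∏ i ∈ Finset.range (p-r), q (k+r+1+i))))
      = ((∏ i ∈ Finset.range (r+1), Lh (n+i) (k+r-i)) * ((∏ i ∈ Finset.range (r+1), q (n+p-i)) * (∏ i ∈ Finset.range (r+1), q (k+r-i)))) * ((∏ i ∈ Finset.range (p-r), Lh (n+p-i) (k+r+i+1)) * ((∏ i ∈ Finset.range (p-r), q (n+i)) * (∏ i ∈ Finset.range (p-r), q (k+r+1+i)))) := by ring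
    _ = ((∏ i ∈ Finset.range (r+1), Lh (n+p-i) (k+p-r+i)) * ((∏ i ∈ Finset.range (r+1), q (n+i)) * (∏ i ∈ Finset.range (r+1), q (k+p-r+i)))) * ((∏ i ∈ Finset.range (p-r), Lh (n+p-i) (k+r+i+1)) * ((∏ i ∈ Finset.range (p-r), q (n+i)) * (∏ i ∈ Finset.range (p-r), q (k+r+1+i)))) := by rw [E1]
    _ = ((∏ i ∈ Finset.range (r+1), Lh (n+p-i) (k+p-r+i)) * ((∏ i ∈ Finset.range (r+1), q (n+i)) * (∏ i ∈ Finset.range (r+1), q (k+p-r+i)))) * ((∏ i ∈ Finset.range (p-r), Lh (n+i) (k+p-r-i-1)) * ((∏ i ∈ Finset.range (p-r), q (n+p-i)) * (∏ i ∈ Finset.range (p-r), q (k+p-r-1-i)))) := by rw [← E2]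
    _ = (∏ i ∈ Finset.range (r+1), Lh (n+p-i) (k+p-r+i)) * (∏ i ∈ Finset.range (p-r), Lh (n+i) (k+p-r-i-1)) * ((∏ i ∈ Finset.range (r+1), q (n+i)) * (∏ i ∈ Finset.range (r+1), q (k+p-r+i)) * ((∏ i ∈ Finset.range (p-r), q (n+p-i)) * (∏ i ∈ Finset.range (p-r), q (k+p-r-1-i)))) := by ring
    _ = (∏ i ∈ Finset.range (r+1), Lh (n+p-i) (k+p-r+i)) * (∏ i ∈ Finset.range (p-r), Lh (n+i) (k+p-r-i-1)) * ((∏ i ∈ Finset.range (r+1), q (n+p-i)) * (∏ i ∈ Finset.range (r+1), q (k+r-i)) * ((∏ i ∈ Finset.range (p-r), q (n+i)) * (∏ i ∈ Finset.range (p-r), q (k+r+1+i)))) := by rw [hW]
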